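/- Let S be a semitopological monoid in which all left shifts (or all right shifts) are open maps, and let ~ be a congruence on S. Then the quotient map π : S → S/~ is an open map. -/
import Mathlib


/-- Let S be a semitopological monoid in which all left shifts (or all right shifts)
are open maps, and let ~ be a congruence on S. Then the quotient map
π : S → S/~ is an open map. -/
theorem stmt_0 {S : Type*} [Monoid S] [TopologicalSpace S]
    (hcont : ∀ a : S, Continuous (fun x => a * x) ∧ Continuous (fun x => x * a))
    (hopen : (∀ a : S, IsOpenMap (fun x => a * x)) ∨ (∀ a : S, IsOpenMap (fun x => x * a)))
    (c : Con S) :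
    IsOpenMap (Quotient.mk c.toSetoid : S → Quotient c.toSetoid) := by
  intro U hU
  rw [isOpen_coinduced]
  have hsat : (Quotient.mk c.toSetoid) ⁻¹' (Quotient.mk c.toSetoid '' U)
      = {x | ∃ u ∈ U, c x u} := by
    ext x
    simp only [Set.mem_preimage, Set.mem_image, Set.mem_setOf_eq]
    constructor
    · rintro ⟨u, hu, h⟩
      exact ⟨u, hu, (Quotient.eq.mp h.symm : c.toSetoid.r x u)⟩
    · rintro ⟨u, hu, h⟩
      exact ⟨u, hu, (Quotient.sound (h : c.toSetoid.r x u)).symm⟩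
  show IsOpen (Quotient.mk c.toSetoid ⁻¹' (Quotient.mk c.toSetoid '' U))
  rw [hsat]
  rw [isOpen_iff_forall_mem_open]
  rintro x ⟨u, hu, hxu⟩
  rcases hopen with h | h
  · refine ⟨(fun y => x * y) '' ((fun y => u * y) ⁻¹' U), ?_, ?_, ?_⟩
    · rintro _ ⟨y, hy, rfl⟩
      exact ⟨u * y, hy, c.mul hxu (c.refl y)⟩
    · exact h x _ ((hcont u).1.isOpen_preimage U hU)
    · exact ⟨1, by simpa using hu, mul_one x⟩
  · refine ⟨(fun y => y * x) '' ((fun y => y * u) ⁻¹' U), ?_, ?_, ?_⟩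
    · rintro _ ⟨y, hy, rfl⟩
      exact ⟨y * u, hy, c.mul (c.refl y) hxu⟩
    · exact h x _ ((hcont u).2.isOpen_preimage U hU)
    · exact ⟨1, by simpa using hu, one_mul x⟩
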